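/- Let ℓ be an odd prime and n ≥ 1, and write T_ℓ^n(x) = Σ_i c_i x^i, so that c_i is the coefficient of x^i in T_ℓ^n. For all integers m and i with 0 ≤ m ≤ n and 0 < i ≤ ℓ^m, one has ν_ℓ(c_i) ≥ n − m, with equality only if i = ℓ^m; moreover ν_ℓ(c_{ℓ^m}) = n − m exactly. -/

import Mathlib

open Polynomial

/-- The monic Chebyshev polynomial of the first kind of degree `d`,
the unique monic integer polynomial with `T_d(z + z⁻¹) = z^d + z^{-d}`. -/
noncomputable def chebT (d : ℕ) : Polynomial ℤ := Polynomial.dickson 1 1 d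

/-- The `n`-fold composition `T_ℓ ∘ ⋯ ∘ T_ℓ` of the monic Chebyshev polynomial. -/
noncomputable def chebTIter (ℓ n : ℕ) : Polynomial ℤ :=
  ((chebT ℓ).comp)^[n] Polynomial.X

lemma cheb_natDegree_le : ∀ n, (dickson 1 (1:ℤ) n).natDegree ≤ n := by
  intro n
  induction n using Nat.strong_induction_on with
  | _ n ih =>
    match n with
    | 0 => rw [dickson_zero]; norm_num
    | 1 => simp [dickson_one]
    | (n+2) =>
      rw [dickson_add_two]
      refine le_trans (natDegree_sub_le _ _) (max_le ?_ ?_)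
      · refine le_trans (natDegree_mul_le) ?_
        have := ih (n+1) (by omega)
        simpa [natDegree_X] using by omega
      · simp only [map_one, one_mul]
        exact le_trans (ih n (by omega)) (by omega)

lemma cheb_coeff_top : ∀ n, (dickson 1 (1:ℤ) (n+1)).coeff (n+1) = 1 := by
  intro n
  induction n using Nat.strong_induction_on with
  | _ n ih =>
    match n with
    | 0 => simp [dickson_one]
    | 1 =>
      rw [dickson_add_two, dickson_one, dickson_zero]
      simp [coeff_X_mul, coeff_one]
    | (n+2) =>
      have h1 : (dickson 1 (1:ℤ) (n+1)).coeff (n+2+1) = 0 :=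
        coeff_eq_zero_of_natDegree_lt (lt_of_le_of_lt (cheb_natDegree_le (n+1)) (by omega))
      rw [dickson_add_two, coeff_sub, coeff_X_mul, map_one, one_mul, h1, sub_zero]
      exact ih (n+1) (by omega)

lemma chebT_monic (d : ℕ) (hd : d ≠ 0) : (chebT d).Monic := by
  obtain ⟨e, rfl⟩ : ∃ e, d = e + 1 := ⟨d - 1, by omega⟩
  exact monic_of_natDegree_le_of_coeff_eq_one _ (cheb_natDegree_le _) (cheb_coeff_top e)

lemma chebT_natDegree (d : ℕ) (hd : d ≠ 0) : (chebT d).natDegree = d := by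
  obtain ⟨e, rfl⟩ : ∃ e, d = e + 1 := ⟨d - 1, by omega⟩
  refine le_antisymm (cheb_natDegree_le _) (le_natDegree_of_ne_zero ?_)
  show (dickson 1 (1:ℤ) (e+1)).coeff (e+1) ≠ 0
  rw [cheb_coeff_top e]; norm_num

lemma cheb_coeff01 : ∀ k : ℕ,
    (dickson 1 (1:ℤ) (2*k)).coeff 0 = (-1)^k * 2 ∧
    (dickson 1 (1:ℤ) (2*k)).coeff 1 = 0 ∧
    (dickson 1 (1:ℤ) (2*k+1)).coeff 0 = 0 ∧
    (dickson 1 (1:ℤ) (2*k+1)).coeff 1 = (-1)^k * (2*(k:ℤ)+1) := by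
  intro k
  induction k with
  | zero =>
    rw [mul_zero, dickson_zero, dickson_one]
    norm_num
  | succ k ih =>
    obtain ⟨h0, h1, h2, h3⟩ := ih
    have e1 : 2 * (k+1) = 2*k + 2 := by ring
    have e2 : 2 * (k+1) + 1 = (2*k+1) + 2 := by ring
    have A0 : (dickson 1 (1:ℤ) (2*(k+1))).coeff 0 = (-1)^(k+1) * 2 := by
      rw [e1, dickson_add_two, coeff_sub, mul_coeff_zero, coeff_X_zero, zero_mul, map_one,
        one_mul, h0]
      ring
    have A1 : (dickson 1 (1:ℤ) (2*(k+1))).coeff 1 = 0 := by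
      rw [e1, dickson_add_two, coeff_sub, map_one, one_mul, h1, sub_zero]
      rw [show (1:ℕ) = 0+1 from rfl, coeff_X_mul, h2]
    refine ⟨A0, A1, ?_, ?_⟩
    · rw [e2, dickson_add_two, coeff_sub, mul_coeff_zero, coeff_X_zero, zero_mul, map_one,
        one_mul, h2, sub_zero]
    · rw [e2, dickson_add_two, coeff_sub, map_one, one_mul, h3]
      rw [show (1:ℕ) = 0+1 from rfl, coeff_X_mul, ← e1, A0]
      push_cast
      ring

lemma chebT_map_zmod (ℓ : ℕ) (hℓ : ℓ.Prime) :
    (chebT ℓ).map (Int.castRingHom (ZMod ℓ)) = X ^ ℓ := by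
  haveI : Fact ℓ.Prime := ⟨hℓ⟩
  rw [chebT, map_dickson]
  have : (Int.castRingHom (ZMod ℓ)) (1:ℤ) = 1 := map_one _
  rw [this, dickson_one_one_zmod_p]

lemma chebT_decomp (ℓ : ℕ) (hℓ : ℓ.Prime) (hodd : Odd ℓ) :
    ∃ E : Polynomial ℤ, chebT ℓ = X ^ ℓ + C (ℓ:ℤ) * E ∧ E.coeff 0 = 0 ∧
      ¬ ((ℓ:ℤ) ∣ E.coeff 1) := by
  obtain ⟨k, hk⟩ := hodd
  have hdvd : C (ℓ:ℤ) ∣ chebT ℓ - X ^ ℓ := by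
    rw [C_dvd_iff_dvd_coeff]
    intro i
    have : ((chebT ℓ - X ^ ℓ).coeff i : ZMod ℓ) = 0 := by
      have := chebT_map_zmod ℓ hℓ
      have h2 : ((chebT ℓ - X ^ ℓ).map (Int.castRingHom (ZMod ℓ))) = 0 := by
        rw [Polynomial.map_sub, this, Polynomial.map_pow, Polynomial.map_X, sub_self]
      have := congrArg (fun p => Polynomial.coeff p i) h2
      simpa using this
    exact_mod_cast (ZMod.intCast_zmod_eq_zero_iff_dvd _ _).mp this
  obtain ⟨E, hE⟩ := hdvd
  have hT : chebT ℓ = X ^ ℓ + C (ℓ:ℤ) * E := by linear_combination hE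
  have hℓpos : (0:ℤ) < (ℓ:ℤ) := by exact_mod_cast hℓ.pos
  have hc0 : (chebT ℓ).coeff 0 = 0 := by
    rw [chebT, hk]; exact (cheb_coeff01 k).2.2.1
  have hc1 : (chebT ℓ).coeff 1 = (-1)^k * (ℓ:ℤ) := by
    rw [chebT, hk, (cheb_coeff01 k).2.2.2]; push_cast [hk]; ring
  have hXc0 : (X ^ ℓ : Polynomial ℤ).coeff 0 = 0 := by
    rw [coeff_X_pow]; simp [hℓ.ne_zero, Ne.symm (hℓ.ne_zero)]
  have hXc1 : (X ^ ℓ : Polynomial ℤ).coeff 1 = 0 := by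
    rw [coeff_X_pow]; simp [Ne.symm hℓ.ne_one]
  have e0 : E.coeff 0 = 0 := by
    have := congrArg (fun p => Polynomial.coeff p 0) hT
    simp only [coeff_add, coeff_C_mul, hXc0, hc0, zero_add] at this
    have : (ℓ:ℤ) * E.coeff 0 = 0 := this.symm
    exact (mul_eq_zero.mp this).resolve_left (by positivity)
  have e1 : E.coeff 1 = (-1)^k := by
    have := congrArg (fun p => Polynomial.coeff p 1) hT
    simp only [coeff_add, coeff_C_mul, hXc1, hc1, zero_add] at this
    have h3 : (ℓ:ℤ) * E.coeff 1 = (ℓ:ℤ) * (-1)^k := by linear_combination -this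
    exact mul_left_cancel₀ (by positivity) h3
  refine ⟨E, hT, e0, ?_⟩
  rw [e1]
  intro h
  have hu : IsUnit ((-1:ℤ)^k) := (IsUnit.neg isUnit_one).pow k
  have := isUnit_of_dvd_unit h hu
  rw [Int.isUnit_iff] at this
  have h2 : (2:ℤ) ≤ (ℓ:ℤ) := by exact_mod_cast hℓ.two_le
  omega

lemma chebTIter_succ (ℓ n : ℕ) :
    chebTIter ℓ (n+1) = (chebT ℓ).comp (chebTIter ℓ n) :=
  Function.iterate_succ_apply' _ _ _

lemma chebTIter_monic (ℓ : ℕ) (hℓ : ℓ ≠ 0) (n : ℕ) :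
    (chebTIter ℓ n).Monic ∧ (chebTIter ℓ n).natDegree = ℓ ^ n := by
  induction n with
  | zero => exact ⟨monic_X, natDegree_X⟩
  | succ n ih =>
    rw [chebTIter_succ]
    constructor
    · exact (chebT_monic ℓ hℓ).comp ih.1 (by rw [ih.2]; positivity)
    · rw [natDegree_comp, ih.2, chebT_natDegree ℓ hℓ, pow_succ, mul_comm]

lemma chebTIter_coeff_zero (ℓ : ℕ) (hℓ : ℓ.Prime) (hodd : Odd ℓ) (n : ℕ) :
    (chebTIter ℓ n).coeff 0 = 0 := by
  induction n with
  | zero => exact coeff_X_zero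
  | succ n ih =>
    obtain ⟨E, hT, hE0, _⟩ := chebT_decomp ℓ hℓ hodd
    rw [chebTIter_succ, coeff_zero_eq_eval_zero, eval_comp, ← coeff_zero_eq_eval_zero, ih,
      ← coeff_zero_eq_eval_zero]
    rw [hT, coeff_add, coeff_C_mul, hE0, mul_zero, add_zero, coeff_X_pow]
    simp [Ne.symm hℓ.ne_zero, hℓ.ne_zero]

lemma chebTIter_map_zmod (ℓ : ℕ) (hℓ : ℓ.Prime) (n : ℕ) :
    (chebTIter ℓ n).map (Int.castRingHom (ZMod ℓ)) = X ^ ℓ ^ n := by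
  induction n with
  | zero => simp [chebTIter]
  | succ n ih =>
    rw [chebTIter_succ, Polynomial.map_comp, ih, chebT_map_zmod ℓ hℓ, X_pow_comp,
      ← pow_mul, pow_succ]

lemma chebTIter_top (ℓ : ℕ) (hℓ : ℓ.Prime) (n : ℕ) :
    (∀ i, i ≠ ℓ ^ n → (ℓ:ℤ) ∣ (chebTIter ℓ n).coeff i) ∧
      (chebTIter ℓ n).coeff (ℓ ^ n) = 1 := by
  constructor
  · intro i hi
    have := congrArg (fun p => Polynomial.coeff p i) (chebTIter_map_zmod ℓ hℓ n)
    simp only [coeff_map, coeff_X_pow, if_neg hi] at this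
    exact_mod_cast (ZMod.intCast_zmod_eq_zero_iff_dvd _ _).mp (by exact_mod_cast this)
  · have h := chebTIter_monic ℓ hℓ.ne_zero n
    have := h.1.coeff_natDegree
    rwa [h.2] at this

lemma coeff_mul_dvd {N : ℕ} {d1 d2 : ℤ} {P Q : Polynomial ℤ}
    (hP0 : P.coeff 0 = 0) (hQ0 : Q.coeff 0 = 0)
    (hP : ∀ j, j < N → d1 ∣ P.coeff j) (hQ : ∀ j, j < N → d2 ∣ Q.coeff j) :
    ∀ i, i ≤ N → d1 * d2 ∣ (P * Q).coeff i := by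
  intro i hi
  rw [coeff_mul]
  refine Finset.dvd_sum ?_
  rintro ⟨j, k⟩ hjk
  rw [Finset.HasAntidiagonal.mem_antidiagonal] at hjk
  simp only
  rcases Nat.eq_zero_or_pos j with rfl | hj
  · rw [hP0, zero_mul]; exact dvd_zero _
  rcases Nat.eq_zero_or_pos k with rfl | hk
  · rw [hQ0, mul_zero]; exact dvd_zero _
  exact mul_dvd_mul (hP j (by omega)) (hQ k (by omega))

lemma pow_coeff_dvd {N : ℕ} {d : ℤ} {F : Polynomial ℤ}
    (hF0 : F.coeff 0 = 0) (hF : ∀ j, j < N → d ∣ F.coeff j) :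
    ∀ s, 1 ≤ s → ((F ^ s).coeff 0 = 0 ∧ ∀ j, j < N → d ∣ (F ^ s).coeff j) := by
  intro s hs
  induction s with
  | zero => omega
  | succ s ih =>
    rcases Nat.eq_zero_or_pos s with rfl | hs'
    · simpa using ⟨hF0, hF⟩
    obtain ⟨ih0, ihd⟩ := ih hs'
    rw [pow_succ']
    constructor
    · rw [mul_coeff_zero, hF0, zero_mul]
    · intro j hj
      have := coeff_mul_dvd hF0 ih0 hF (fun j _ => one_dvd _) j (le_of_lt hj)
      simpa using this

lemma pow_coeff_dvd_sq {N : ℕ} {d : ℤ} {F : Polynomial ℤ}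
    (hF0 : F.coeff 0 = 0) (hF : ∀ j, j < N → d ∣ F.coeff j) :
    ∀ s, 2 ≤ s → ∀ i, i ≤ N → d * d ∣ (F ^ s).coeff i := by
  intro s hs i hi
  obtain ⟨s', rfl⟩ : ∃ s', s = s' + 1 := ⟨s - 1, by omega⟩
  obtain ⟨ih0, ihd⟩ := pow_coeff_dvd hF0 hF s' (by omega)
  rw [pow_succ']
  exact coeff_mul_dvd hF0 ih0 hF ihd i hi

lemma cheb_key (ℓ : ℕ) (hℓ : ℓ.Prime) (hodd : Odd ℓ) :
    ∀ n m, m ≤ n →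
    (∀ i, i < ℓ ^ m → (ℓ:ℤ) ^ (n - m + 1) ∣ (chebTIter ℓ n).coeff i) ∧
    ((ℓ:ℤ) ^ (n - m) ∣ (chebTIter ℓ n).coeff (ℓ ^ m)) ∧
    ¬ ((ℓ:ℤ) ^ (n - m + 1) ∣ (chebTIter ℓ n).coeff (ℓ ^ m)) := by
  have hprime : Prime (ℓ:ℤ) := Nat.prime_iff_prime_int.mp hℓ
  have hℓne : (ℓ:ℤ) ≠ 0 := hprime.ne_zero
  have hnotdvd1 : ¬ ((ℓ:ℤ) ∣ 1) := fun h => hprime.not_unit (isUnit_of_dvd_one h)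
  -- the top case m = n
  have top : ∀ n,
      (∀ i, i < ℓ ^ n → (ℓ:ℤ) ^ (n - n + 1) ∣ (chebTIter ℓ n).coeff i) ∧
      ((ℓ:ℤ) ^ (n - n) ∣ (chebTIter ℓ n).coeff (ℓ ^ n)) ∧
      ¬ ((ℓ:ℤ) ^ (n - n + 1) ∣ (chebTIter ℓ n).coeff (ℓ ^ n)) := by
    intro n
    obtain ⟨ht1, ht2⟩ := chebTIter_top ℓ hℓ n
    rw [Nat.sub_self]
    refine ⟨fun i hi => ?_, ?_, ?_⟩
    · rw [pow_one]; exact ht1 i (by omega)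
    · simp
    · rw [pow_one, ht2]; exact hnotdvd1
  intro n
  induction n with
  | zero =>
    intro m hm
    obtain rfl : m = 0 := by omega
    exact top 0
  | succ n IH =>
    intro m hm
    rcases eq_or_lt_of_le hm with rfl | hmn
    · exact top (n+1)
    have hmn' : m ≤ n := by omega
    obtain ⟨S1, S2a, S2b⟩ := IH m hmn'
    set F := chebTIter ℓ n with hF
    set a := n - m with ha
    set N := ℓ ^ m with hN
    have hF0 : F.coeff 0 = 0 := chebTIter_coeff_zero ℓ hℓ hodd n
    obtain ⟨E, hT, hE0, hE1⟩ := chebT_decomp ℓ hℓ hodd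
    have hcomp : chebTIter ℓ (n+1) = F ^ ℓ + C (ℓ:ℤ) * (E.comp F) := by
      rw [chebTIter_succ, hT, add_comp, X_pow_comp, mul_comp, C_comp]
    have hco : ∀ i, (chebTIter ℓ (n+1)).coeff i
        = (F ^ ℓ).coeff i + (ℓ:ℤ) * (E.comp F).coeff i := by
      intro i; rw [hcomp, coeff_add, coeff_C_mul]
    have hEco : ∀ i, (E.comp F).coeff i
        = ∑ s ∈ E.support, E.coeff s * (F ^ s).coeff i := by
      intro i
      rw [comp_eq_sum_left, Polynomial.sum, finset_sum_coeff]
      exact Finset.sum_congr rfl fun s _ => by rw [coeff_C_mul]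
    have hsupp : ∀ s ∈ E.support, 1 ≤ s := by
      intro s hs
      rcases Nat.eq_zero_or_pos s with rfl | h
      · exact absurd hE0 (mem_support_iff.mp hs)
      · exact h
    have P1 := pow_coeff_dvd (d := (ℓ:ℤ)^(a+1)) (N := N) hF0 S1
    have P2 := pow_coeff_dvd_sq (d := (ℓ:ℤ)^(a+1)) (N := N) hF0 S1
    have hEF : ∀ i, i < N → (ℓ:ℤ) ^ (a+1) ∣ (E.comp F).coeff i := by
      intro i hi
      rw [hEco]
      exact Finset.dvd_sum fun s hs => ((P1 s (hsupp s hs)).2 i hi).mul_left _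
    have hFl : ∀ i, i ≤ N → (ℓ:ℤ) ^ (a+2) ∣ (F ^ ℓ).coeff i := by
      intro i hi
      refine dvd_trans ?_ (P2 ℓ hℓ.two_le i hi)
      rw [← pow_add]
      exact pow_dvd_pow _ (by omega)
    have key1 : ∀ i, i < N → (ℓ:ℤ) ^ (a+2) ∣ (chebTIter ℓ (n+1)).coeff i := by
      intro i hi
      rw [hco]
      refine dvd_add (hFl i (le_of_lt hi)) ?_
      rw [pow_succ']
      exact mul_dvd_mul_left _ (hEF i hi)
    have h1supp : 1 ∈ E.support :=
      mem_support_iff.mpr (fun h => hE1 (by rw [h]; exact dvd_zero _))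
    have hsplit : (E.comp F).coeff N = E.coeff 1 * F.coeff N
        + ∑ s ∈ E.support.erase 1, E.coeff s * (F ^ s).coeff N := by
      rw [hEco, ← Finset.add_sum_erase _ _ h1supp, pow_one]
    have hR : (ℓ:ℤ) ^ (a+2) ∣ ∑ s ∈ E.support.erase 1, E.coeff s * (F ^ s).coeff N := by
      refine Finset.dvd_sum fun s hs => ?_
      have hs1 := hsupp s (Finset.mem_of_mem_erase hs)
      have hs0 := Finset.ne_of_mem_erase hs
      refine Dvd.dvd.mul_left (dvd_trans ?_ (P2 s (by omega) N le_rfl)) _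
      rw [← pow_add]; exact pow_dvd_pow _ (by omega)
    set R := ∑ s ∈ E.support.erase 1, E.coeff s * (F ^ s).coeff N with hRdef
    have hcN : (chebTIter ℓ (n+1)).coeff N = (ℓ:ℤ) * (E.coeff 1 * F.coeff N)
        + ((F ^ ℓ).coeff N + (ℓ:ℤ) * R) := by
      rw [hco, hsplit]; ring
    have hW : (ℓ:ℤ) ^ (a+2) ∣ (F ^ ℓ).coeff N + (ℓ:ℤ) * R :=
      dvd_add (hFl N le_rfl) (hR.mul_left _)
    have hdv : (ℓ:ℤ) ^ (a+1) ∣ (chebTIter ℓ (n+1)).coeff N := by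
      rw [hcN]
      refine dvd_add ?_ (dvd_trans (pow_dvd_pow _ (by omega)) hW)
      rw [pow_succ']
      exact mul_dvd_mul_left _ (S2a.mul_left _)
    have hnd : ¬ (ℓ:ℤ) ^ (a+2) ∣ (chebTIter ℓ (n+1)).coeff N := by
      intro h
      have h2 : (ℓ:ℤ) ^ (a+2) ∣ (ℓ:ℤ) * (E.coeff 1 * F.coeff N) := by
        have := dvd_sub h hW
        rwa [hcN, add_sub_cancel_right] at this
      rw [pow_succ', mul_dvd_mul_iff_left hℓne] at h2
      exact S2b (hprime.pow_dvd_of_dvd_mul_left _ hE1 h2)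
    have hsub1 : n + 1 - m = a + 1 := by omega

    rw [hsub1]
    exact ⟨key1, hdv, hnd⟩

/-- `ν_ℓ(c_i) ≥ n - m` is expressed as `ℓ^(n-m) ∣ c_i` (valid also when `c_i = 0`,
where the valuation is `∞`), and `ν_ℓ(c_i) = n - m` as `ℓ^(n-m) ∣ c_i` together with
`¬ ℓ^(n-m+1) ∣ c_i`. -/
theorem stmt10 (ℓ : ℕ) (hℓ : ℓ.Prime) (hodd : Odd ℓ) (n : ℕ) (hn : 1 ≤ n)
    (m i : ℕ) (hm : m ≤ n) (hi0 : 0 < i) (hi : i ≤ ℓ ^ m) :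
    ((ℓ : ℤ) ^ (n - m) ∣ (chebTIter ℓ n).coeff i) ∧
    (¬ ((ℓ : ℤ) ^ (n - m + 1) ∣ (chebTIter ℓ n).coeff i) → i = ℓ ^ m) ∧
    ((ℓ : ℤ) ^ (n - m) ∣ (chebTIter ℓ n).coeff (ℓ ^ m) ∧
      ¬ ((ℓ : ℤ) ^ (n - m + 1) ∣ (chebTIter ℓ n).coeff (ℓ ^ m))) := by
  obtain ⟨S1, S2a, S2b⟩ := cheb_key ℓ hℓ hodd n m hm
  refine ⟨?_, ?_, S2a, S2b⟩
  · rcases eq_or_lt_of_le hi with rfl | hlt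
    · exact S2a
    · exact dvd_trans (pow_dvd_pow _ (Nat.le_succ _)) (S1 i hlt)
  · intro h
    by_contra hne
    exact h (S1 i (lt_of_le_of_ne hi hne))
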